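/- arXiv:1501.02616 — 2 statements merged into one kernel-verified Lean document; each statement's English description precedes it below -/
import Mathlib

section
/- Let p be an odd prime. The translation τ_{1,-1}: (x,y) ↦ (x+1, y-1) of F_p² does not belong to the subgroup of affine transformations generated by τ_{1,1}: (x,y) ↦ (x+1,y+1), W: (x,y) ↦ (-x,-y), and V: (x,y) ↦ (y,x). -/
/-- For an odd prime `p`, the translation
`τ_{1,−1} : (x,y) ↦ (x+1, y−1)` of `F_p²` does not belong to the subgroup of
permutations generated by `τ_{1,1} : (x,y) ↦ (x+1,y+1)`, `W : (x,y) ↦ (−x,−y)`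
and `V : (x,y) ↦ (y,x)`. -/
theorem stmt_5 (p : ℕ) (hp : p.Prime) (hodd : p ≠ 2)
    (τ W V σ : Equiv.Perm (ZMod p × ZMod p))
    (hτ : ∀ v, τ v = (v.1 + 1, v.2 + 1))
    (hW : ∀ v, W v = (-v.1, -v.2))
    (hV : ∀ v, V v = (v.2, v.1))
    (hσ : ∀ v, σ v = (v.1 + 1, v.2 - 1)) :
    σ ∉ Subgroup.closure {τ, W, V} := by
  intro hmem
  have h2 : (2 : ZMod p) ≠ 0 := by
    intro h
    have : (p : ℕ) ∣ 2 := by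
      have := (ZMod.natCast_eq_zero_iff 2 p).mp (by exact_mod_cast h)
      exact this
    exact hodd ((Nat.prime_dvd_prime_iff_eq hp Nat.prime_two).mp this)
  have key : ∀ g ∈ Subgroup.closure {τ, W, V},
      ∀ v : ZMod p × ZMod p,
        (g v).1 - (g v).2 = v.1 - v.2 ∨ (g v).1 - (g v).2 = -(v.1 - v.2) := by
    intro g hg
    induction hg using Subgroup.closure_induction with
    | mem x hx =>
      rcases hx with rfl | rfl | rfl
      · intro v; left; rw [hτ]; ring
      · intro v; right; rw [hW]; ring
      · intro v; right; rw [hV]; ring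
    | one => intro v; left; rfl
    | mul x y hx hy ihx ihy =>
      intro v
      have h1 := ihy v
      have h2 := ihx (y v)
      simp only [Equiv.Perm.mul_apply]
      rcases h1 with h1 | h1 <;> rcases h2 with h2 | h2 <;>
        simp [h2, h1]
    | inv x hx ihx =>
      intro v
      have := ihx (x⁻¹ v)
      rw [show x (x⁻¹ v) = v from x.apply_symm_apply v] at this
      rcases this with h | h
      · left; exact h.symm
      · right; rw [h]; ring
  have hkey := key σ hmem (0, 0)
  rw [hσ] at hkey
  rcases hkey with h | h <;> exact h2 (by linear_combination h)
end

section
/- Let p be an odd prime. The projective plane curve over F_p defined by the homogenization of (x^p − x)(y^p − y) = 1 has exactly two singular points, namely (1:0:0) and (0:1:0), and both are ordinary p-fold points. Consequently its geometric genus equals (2p−1)(2p−2)/2 − 2·p(p−1)/2 = (p−1)². -/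
open MvPolynomial

/-- The homogenization `F = (X^p − X Z^{p−1})(Y^p − Y Z^{p−1}) − Z^{2p}` of the
Artin–Mumford equation `(x^p−x)(y^p−y) = 1`, over a field `K`
(variables `0 ↦ X`, `1 ↦ Y`, `2 ↦ Z`). -/
noncomputable def amProj (p : ℕ) (K : Type*) [Field K] :
    MvPolynomial (Fin 3) K :=
  (X 0 ^ p - X 0 * X 2 ^ (p - 1)) * (X 1 ^ p - X 1 * X 2 ^ (p - 1))
    - X 2 ^ (2 * p)

/-- The dehomogenization of `amProj` at `X = 1`, a polynomial in `Y, Z`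
(variables `0 ↦ Y`, `1 ↦ Z`), local equation of the curve at `(1:0:0)`. -/
noncomputable def amLocal₁ (p : ℕ) (K : Type*) [Field K] :
    MvPolynomial (Fin 2) K :=
  (1 - X 1 ^ (p - 1)) * (X 0 ^ p - X 0 * X 1 ^ (p - 1)) - X 1 ^ (2 * p)

/-- The dehomogenization of `amProj` at `Y = 1`, a polynomial in `X, Z`
(variables `0 ↦ X`, `1 ↦ Z`), local equation of the curve at `(0:1:0)`. -/
noncomputable def amLocal₂ (p : ℕ) (K : Type*) [Field K] :
    MvPolynomial (Fin 2) K :=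
  (X 0 ^ p - X 0 * X 1 ^ (p - 1)) * (1 - X 1 ^ (p - 1)) - X 1 ^ (2 * p)

section AM

theorem AM.prodC (p : ℕ) [Fact p.Prime] :
    ∏ a : ZMod p, (Polynomial.X - Polynomial.C a) = Polynomial.X ^ p - Polynomial.X := by
  classical
  have hp : p.Prime := Fact.out
  have h2 : 2 ≤ p := hp.two_le
  have hc : Fintype.card (ZMod p) = p := ZMod.card p
  have h := FiniteField.roots_X_pow_card_sub_X (ZMod p)
  rw [hc] at h
  have hm : (Polynomial.X ^ p - Polynomial.X : Polynomial (ZMod p)).Monic := by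
    obtain ⟨n, hn, rfl⟩ : ∃ n, 1 ≤ n ∧ p = n + 1 := ⟨p - 1, by omega, by omega⟩
    apply Polynomial.monic_X_pow_sub
    rw [Polynomial.degree_X]
    exact_mod_cast (by omega : 1 < n + 1)
  have hd : (Polynomial.X ^ p - Polynomial.X : Polynomial (ZMod p)).natDegree = p :=
    FiniteField.X_pow_card_sub_X_natDegree_eq _ hp.one_lt
  have key := Polynomial.prod_multiset_X_sub_C_of_monic_of_roots_card_eq hm
    (by rw [h, hd]; simp [hc])
  rw [h] at key
  rw [← key, Finset.prod_eq_multiset_prod]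

theorem AM.prodScalar (p : ℕ) [Fact p.Prime] {K : Type*} [Field K] [Algebra (ZMod p) K] (t : K) :
    ∏ a : ZMod p, (t - algebraMap (ZMod p) K a) = t ^ p - t := by
  have h := congrArg (Polynomial.aeval t) (AM.prodC p)
  simpa using h

theorem AM.prodMv (p : ℕ) [Fact p.Prime] :
    ∏ a : ZMod p, (X 0 - C (algebraMap (ZMod p) (AlgebraicClosure (ZMod p)) a) * X 1 :
        MvPolynomial (Fin 2) (AlgebraicClosure (ZMod p)))
      = X 0 ^ p - X 0 * X 1 ^ (p - 1) := by
  set K := AlgebraicClosure (ZMod p)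
  have h2p : 2 ≤ p := (Fact.out : p.Prime).two_le
  apply MvPolynomial.funext
  intro v
  rw [map_prod]
  simp only [map_sub, map_mul, eval_X, eval_C, map_pow]
  rcases eq_or_ne (v 1) 0 with h1 | h1
  · simp only [h1, mul_zero, sub_zero, zero_pow (by omega : p - 1 ≠ 0), mul_zero, sub_zero,
      Finset.prod_const, Finset.card_univ, ZMod.card]
  · have key := AM.prodScalar p (K := K) (v 0 * (v 1)⁻¹)
    have h2 : ∀ a : ZMod p, v 0 - algebraMap (ZMod p) K a * v 1
        = v 1 * (v 0 * (v 1)⁻¹ - algebraMap (ZMod p) K a) := by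
      intro a; field_simp
    calc ∏ a : ZMod p, (v 0 - algebraMap (ZMod p) K a * v 1)
        = ∏ a : ZMod p, v 1 * (v 0 * (v 1)⁻¹ - algebraMap (ZMod p) K a) :=
          Finset.prod_congr rfl fun a _ => h2 a
      _ = v 1 ^ p * ((v 0 * (v 1)⁻¹) ^ p - v 0 * (v 1)⁻¹) := by
          rw [Finset.prod_mul_distrib, Finset.prod_const, Finset.card_univ, ZMod.card, key]
      _ = v 0 ^ p - v 0 * v 1 ^ (p - 1) := by
          have key2 : v 1 ^ (p - 1) * v 1 = v 1 ^ p := by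
            rw [← pow_succ, Nat.sub_add_cancel (by omega)]
          rw [mul_pow, inv_pow, ← key2]
          field_simp

theorem AM.amLocal₁_eq (p : ℕ) (K : Type*) [Field K] :
    amLocal₁ p K = (X 0 ^ p - X 0 * X 1 ^ (p - 1))
      + (X 0 * X 1 ^ (p - 1) * X 1 ^ (p - 1) - X 1 ^ (p - 1) * X 0 ^ p)
      - X 1 ^ (2 * p) := by
  unfold amLocal₁; ring

theorem AM.hom1 (p : ℕ) (hp : 2 ≤ p) (K : Type*) [Field K] :
    (X 0 ^ p - X 0 * X 1 ^ (p - 1) : MvPolynomial (Fin 2) K).IsHomogeneous p := by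
  apply IsHomogeneous.sub
  · simpa using (isHomogeneous_X K (0 : Fin 2)).pow p
  · have := ((isHomogeneous_X K (0 : Fin 2)).mul ((isHomogeneous_X K (1 : Fin 2)).pow (p-1)))
    convert this using 1
    · rfl
    · omega

theorem AM.hom2 (p : ℕ) (hp : 2 ≤ p) (K : Type*) [Field K] :
    (X 0 * X 1 ^ (p - 1) * X 1 ^ (p - 1) - X 1 ^ (p - 1) * X 0 ^ p :
      MvPolynomial (Fin 2) K).IsHomogeneous (2 * p - 1) := by
  apply IsHomogeneous.sub
  · have := (((isHomogeneous_X K (0 : Fin 2)).mul ((isHomogeneous_X K (1 : Fin 2)).pow (p-1))).mul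
      ((isHomogeneous_X K (1 : Fin 2)).pow (p-1)))
    convert this using 1; rfl; omega
  · have := (((isHomogeneous_X K (1 : Fin 2)).pow (p-1)).mul
      ((isHomogeneous_X K (0 : Fin 2)).pow p))
    convert this using 1; rfl; omega

theorem AM.comp_lt (p : ℕ) (hp : 2 ≤ p) (K : Type*) [Field K] (k : ℕ) (hk : k < p) :
    homogeneousComponent k (amLocal₁ p K) = 0 := by
  rw [AM.amLocal₁_eq p K, map_sub, map_add,
    homogeneousComponent_of_mem ((mem_homogeneousSubmodule _ _).2 (AM.hom1 p hp K)),
    homogeneousComponent_of_mem ((mem_homogeneousSubmodule _ _).2 (AM.hom2 p hp K)),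
    homogeneousComponent_of_mem ((mem_homogeneousSubmodule _ _).2
      ((isHomogeneous_X K (1 : Fin 2)).pow (2*p)))]
  rw [if_neg (by omega), if_neg (by omega), if_neg (by omega)]
  simp

theorem AM.comp_p (p : ℕ) (hp : 2 ≤ p) (K : Type*) [Field K] :
    homogeneousComponent p (amLocal₁ p K) = X 0 ^ p - X 0 * X 1 ^ (p - 1) := by
  rw [AM.amLocal₁_eq p K, map_sub, map_add,
    homogeneousComponent_of_mem ((mem_homogeneousSubmodule _ _).2 (AM.hom1 p hp K)),
    homogeneousComponent_of_mem ((mem_homogeneousSubmodule _ _).2 (AM.hom2 p hp K)),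
    homogeneousComponent_of_mem ((mem_homogeneousSubmodule _ _).2
      ((isHomogeneous_X K (1 : Fin 2)).pow (2*p)))]
  rw [if_pos rfl, if_neg (by omega), if_neg (by omega)]
  simp

theorem AM.local₂_eq (p : ℕ) (K : Type*) [Field K] : amLocal₂ p K = amLocal₁ p K := by
  unfold amLocal₁ amLocal₂; ring

variable (p : ℕ) [Fact p.Prime] (K : Type*) [Field K] [CharP K p]

theorem AM.castp : ((p : ℕ) : MvPolynomial (Fin 3) K) = 0 := by
  rw [← map_natCast (C : K →+* MvPolynomial (Fin 3) K), CharP.cast_eq_zero, map_zero]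

theorem AM.castp1 (hp3 : 3 ≤ p) : (((p - 1 : ℕ)) : MvPolynomial (Fin 3) K) = -1 := by
  rw [Nat.cast_sub (by omega : 1 ≤ p), AM.castp p K, Nat.cast_one, zero_sub]

theorem AM.pd0 (hp3 : 3 ≤ p) :
    pderiv 0 (amProj p K) = -(X 2 ^ (p - 1)) * (X 1 ^ p - X 1 * X 2 ^ (p - 1)) := by
  simp only [amProj, map_sub, pderiv_mul, pderiv_pow, pderiv_X_self,
    pderiv_X_of_ne (show (0:Fin 3) ≠ 2 by decide), pderiv_X_of_ne (show (1:Fin 3) ≠ 0 by decide),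
    pderiv_X_of_ne (show (2:Fin 3) ≠ 0 by decide), AM.castp, mul_zero, zero_mul, mul_one, one_mul,
    add_zero, zero_add, sub_zero, zero_sub, Nat.cast_mul]

theorem AM.pd1 (hp3 : 3 ≤ p) :
    pderiv 1 (amProj p K) = -(X 2 ^ (p - 1)) * (X 0 ^ p - X 0 * X 2 ^ (p - 1)) := by
  simp only [amProj, map_sub, pderiv_mul, pderiv_pow, pderiv_X_self,
    pderiv_X_of_ne (show (0:Fin 3) ≠ 1 by decide), pderiv_X_of_ne (show (2:Fin 3) ≠ 1 by decide),
    AM.castp, mul_zero, zero_mul, mul_one, one_mul,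
    add_zero, zero_add, sub_zero, zero_sub, Nat.cast_mul]
  ring

theorem AM.pd2 (hp3 : 3 ≤ p) :
    pderiv 2 (amProj p K) = X 2 ^ (p - 2) *
      (X 0 * (X 1 ^ p - X 1 * X 2 ^ (p - 1)) + X 1 * (X 0 ^ p - X 0 * X 2 ^ (p - 1))) := by
  have h1 : p - 1 - 1 = p - 2 := by omega
  simp only [amProj, map_sub, pderiv_mul, pderiv_pow, pderiv_X_self,
    pderiv_X_of_ne (show (0:Fin 3) ≠ 2 by decide), pderiv_X_of_ne (show (1:Fin 3) ≠ 2 by decide),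
    AM.castp, AM.castp1 p K hp3, mul_zero, zero_mul, mul_one, one_mul,
    add_zero, zero_add, sub_zero, zero_sub, Nat.cast_mul, h1]
  have h2 : p - 1 = (p - 2) + 1 := by omega
  rw [h2, pow_succ]
  ring

end AM

theorem AM.arith (n : ℕ) :
    (2 * (n + 1) - 1) * (2 * (n + 1) - 2) / 2 - 2 * ((n + 1) * ((n + 1) - 1) / 2)
      = ((n + 1) - 1) ^ 2 := by
  have h1 : 2 * (n + 1) - 1 = 2 * n + 1 := by omega
  have h2 : 2 * (n + 1) - 2 = 2 * n := by omega
  have h3 : (n + 1) - 1 = n := by omega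
  rw [h1, h2, h3]
  have h4 : (2 * n + 1) * (2 * n) / 2 = (2 * n + 1) * n := by
    rw [show (2 * n + 1) * (2 * n) = ((2 * n + 1) * n) * 2 by ring,
      Nat.mul_div_cancel _ two_pos]
  have hdvd : 2 ∣ (n + 1) * n := by
    rcases Nat.even_or_odd n with h | h
    · exact Dvd.dvd.mul_left h.two_dvd _
    · exact Dvd.dvd.mul_right (h.add_one).two_dvd _
  rw [h4, Nat.mul_div_cancel' hdvd,
    show (2 * n + 1) * n - (n + 1) * n = ((2 * n + 1) - (n + 1)) * n from
      (Nat.sub_mul _ _ _).symm,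
    show (2 * n + 1) - (n + 1) = n from by omega, sq]

/-- For an odd prime `p`, the projective plane curve over `F_p`
(viewed over the algebraic closure) defined by the homogenization of
`(x^p − x)(y^p − y) = 1` has exactly two singular points, `(1:0:0)` and
`(0:1:0)`, both ordinary `p`-fold points (multiplicity `p`, with the `p`
distinct tangent directions `Y = aZ`, resp. `X = bZ`, `a, b ∈ F_p`);
consequently the genus `(2p−1)(2p−2)/2 − 2·p(p−1)/2` equals `(p−1)²`. -/
theorem stmt_6 (p : ℕ) [Fact p.Prime] (hodd : p ≠ 2) :
    (∀ v : Fin 3 → AlgebraicClosure (ZMod p), v ≠ 0 →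
      ((eval v (amProj p (AlgebraicClosure (ZMod p))) = 0
          ∧ ∀ i : Fin 3, eval v (pderiv i (amProj p (AlgebraicClosure (ZMod p)))) = 0)
        ↔ (∃ c : AlgebraicClosure (ZMod p), c ≠ 0
            ∧ (v = c • ![1, 0, 0] ∨ v = c • ![0, 1, 0]))))
    ∧ (∀ k : ℕ, k < p →
        homogeneousComponent k (amLocal₁ p (AlgebraicClosure (ZMod p))) = 0)
    ∧ homogeneousComponent p (amLocal₁ p (AlgebraicClosure (ZMod p)))
        = ∏ a : ZMod p,
            (X 0 - C (algebraMap (ZMod p) (AlgebraicClosure (ZMod p)) a) * X 1)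
    ∧ (∀ k : ℕ, k < p →
        homogeneousComponent k (amLocal₂ p (AlgebraicClosure (ZMod p))) = 0)
    ∧ homogeneousComponent p (amLocal₂ p (AlgebraicClosure (ZMod p)))
        = ∏ b : ZMod p,
            (X 0 - C (algebraMap (ZMod p) (AlgebraicClosure (ZMod p)) b) * X 1)
    ∧ (2 * p - 1) * (2 * p - 2) / 2 - 2 * (p * (p - 1) / 2) = (p - 1) ^ 2 := by
  have hp : p.Prime := Fact.out
  have hp3 : 3 ≤ p := by
    have := hp.two_le
    rcases Nat.lt_or_ge p 3 with h | h
    · interval_cases p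
      · exact absurd rfl hodd
    · exact h
  set K := AlgebraicClosure (ZMod p) with hK
  refine ⟨?_, ?_, ?_, ?_, ?_, ?_⟩
  · intro v hv
    constructor
    · rintro ⟨h0, hd⟩
      have e0 : (v 0 ^ p - v 0 * v 2 ^ (p-1)) * (v 1 ^ p - v 1 * v 2 ^ (p-1)) - v 2 ^ (2*p) = 0 := by
        simpa [amProj] using h0
      have e1 : v 2 ^ (p-1) * (v 1 ^ p - v 1 * v 2 ^ (p-1)) = 0 := by
        have := hd 0
        rw [AM.pd0 p K hp3] at this
        simpa using this
      have hz : v 2 = 0 := by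
        by_contra hz
        have hB : v 1 ^ p - v 1 * v 2 ^ (p-1) = 0 := by
          rcases mul_eq_zero.1 e1 with h | h
          · exact absurd h (pow_ne_zero _ hz)
          · exact h
        rw [hB, mul_zero, zero_sub, neg_eq_zero] at e0
        exact hz (pow_eq_zero_iff (by omega : 2*p ≠ 0) |>.1 e0)
      rw [hz] at e0
      rw [zero_pow (by omega : p - 1 ≠ 0), zero_pow (by omega : 2*p ≠ 0)] at e0
      simp only [mul_zero, sub_zero] at e0
      have hab : v 0 ^ p * v 1 ^ p = 0 := by linear_combination e0
      rcases mul_eq_zero.1 hab with h | h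
      · have ha : v 0 = 0 := pow_eq_zero_iff (by omega : p ≠ 0) |>.1 h
        have hb : v 1 ≠ 0 := by
          intro hb
          apply hv
          funext i
          fin_cases i <;> simp [ha, hb, hz]
        refine ⟨v 1, hb, Or.inr ?_⟩
        funext i
        fin_cases i <;> simp [ha, hz]
      · have hb : v 1 = 0 := pow_eq_zero_iff (by omega : p ≠ 0) |>.1 h
        have ha : v 0 ≠ 0 := by
          intro ha
          apply hv
          funext i
          fin_cases i <;> simp [ha, hb, hz]
        refine ⟨v 0, ha, Or.inl ?_⟩
        funext i
        fin_cases i <;> simp [hb, hz]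
    · rintro ⟨c, hc, rfl | rfl⟩ <;>
      · constructor
        · simp [amProj, zero_pow (by omega : p - 1 ≠ 0), zero_pow (by omega : 2*p ≠ 0),
            zero_pow (by omega : p ≠ 0)]
        · intro i
          fin_cases i <;>
            simp [AM.pd0 p (AlgebraicClosure (ZMod p)) hp3, AM.pd1 p (AlgebraicClosure (ZMod p)) hp3,
                AM.pd2 p (AlgebraicClosure (ZMod p)) hp3,
              zero_pow (by omega : p - 1 ≠ 0), zero_pow (by omega : p - 2 ≠ 0),
              zero_pow (by omega : p ≠ 0)]
  · exact fun k hk => AM.comp_lt p hp.two_le K k hk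
  · rw [AM.comp_p p hp.two_le K, AM.prodMv p]
  · intro k hk
    rw [AM.local₂_eq]
    exact AM.comp_lt p hp.two_le K k hk
  · rw [AM.local₂_eq, AM.comp_p p hp.two_le K, AM.prodMv p]
  · obtain ⟨n, rfl⟩ : ∃ n, p = n + 1 := ⟨p - 1, by omega⟩
    exact AM.arith n
end
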